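/- For every integer n ≥ 1, the clique number of the non-commuting graph Γ(U_{6n}) is ω(Γ(U_{6n})) = 4, i.e., the largest complete subgraph of Γ(U_{6n}) has 4 vertices. -/

import Mathlib

/-- The inversion automorphism of `Multiplicative (ZMod 3)` (i.e. `b ↦ b⁻¹`). -/
def negAut : MulAut (Multiplicative (ZMod 3)) := MulEquiv.inv (Multiplicative (ZMod 3))

lemma negAut_sq : negAut * negAut = 1 := by
  ext x
  simp [negAut]

/-- The action of `ZMod (2*n)` on `Multiplicative (ZMod 3)`, where the generator acts
by inversion (negation). -/
def U6nAct (n : ℕ) : Multiplicative (ZMod (2 * n)) →* MulAut (Multiplicative (ZMod 3)) :=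
  AddMonoidHom.toMultiplicativeLeft
    (ZMod.lift (2 * n) ⟨zmultiplesHom _ (Additive.ofMul negAut), by
      show ((2 * n : ℕ) : ℤ) • Additive.ofMul negAut = 0
      have : negAut ^ (2 * n) = 1 := by
        rw [pow_mul, pow_two, negAut_sq, one_pow]
      rw [← zpow_natCast negAut, Nat.cast_mul] at this
      rw [show ((2 * n : ℕ) : ℤ) • Additive.ofMul negAut
            = Additive.ofMul (negAut ^ ((2 * n : ℕ) : ℤ)) from rfl]
      rw [Nat.cast_mul, this]; rfl⟩)

/-- The group `U_{6n} = ⟨a, b | a^(2n) = b³ = 1, a⁻¹ b a = b⁻¹⟩`, realized as the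
semidirect product `(ZMod 3) ⋊ (ZMod (2n))` where the generator of `ZMod (2n)` acts by
negation. -/
abbrev U6n (n : ℕ) := SemidirectProduct (Multiplicative (ZMod 3))
    (Multiplicative (ZMod (2 * n))) (U6nAct n)

/-- The generator `a` of `U_{6n}`, of order `2n`. -/
def Ua (n : ℕ) : U6n n := SemidirectProduct.inr (Multiplicative.ofAdd 1)

/-- The generator `b` of `U_{6n}`, of order `3`. -/
def Ub (n : ℕ) : U6n n := SemidirectProduct.inl (Multiplicative.ofAdd 1)

/-- The non-commuting graph of `U_{6n}`: vertices are the non-central elements, two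
distinct vertices are adjacent iff they do not commute. -/
def ncGraph (n : ℕ) : SimpleGraph {x : U6n n // x ∉ Subgroup.center (U6n n)} where
  Adj u v := u.val * v.val ≠ v.val * u.val
  symm := ⟨fun _ _ h => fun e => h e.symm⟩
  loopless := ⟨fun _ h => h rfl⟩


/-! ### Auxiliary development -/

namespace U6nAux

lemma negAut_pow_even {k : ℕ} (hk : Even k) : negAut ^ k = 1 := by
  obtain ⟨t, rfl⟩ := hk
  rw [← two_mul, pow_mul, pow_two, negAut_sq, one_pow]

lemma negAut_pow_odd {k : ℕ} (hk : ¬ Even k) : negAut ^ k = negAut := by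
  obtain ⟨t, rfl⟩ := Nat.not_even_iff_odd.1 hk
  rw [pow_succ, pow_mul, pow_two, negAut_sq, one_pow, one_mul]

variable {n : ℕ} [NeZero n]

lemma act_eq (m : ZMod (2*n)) : (U6nAct n (Multiplicative.ofAdd m) : MulAut _) = negAut ^ m.val := by
  haveI : NeZero (2*n) := ⟨by have := NeZero.pos n; omega⟩
  have hm : ((m.val : ℤ) : ZMod (2*n)) = m := by
    rw [Int.cast_natCast, ZMod.natCast_val, ZMod.cast_id]
  simp only [U6nAct, AddMonoidHom.coe_toMultiplicativeLeft, Function.comp_apply, toAdd_ofAdd]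
  conv_lhs => rw [← hm, ZMod.lift_coe]
  show Additive.toMul ((m.val : ℤ) • Additive.ofMul negAut) = _
  rw [show ((m.val : ℤ) • Additive.ofMul negAut) = Additive.ofMul (negAut ^ (m.val:ℤ)) from rfl]
  rw [zpow_natCast]
  rfl

/-- parity datum of an element -/
def pr (g : U6n n) : ℕ := (Multiplicative.toAdd g.right).val

/-- the `ZMod 3` component of an element -/
def lf (g : U6n n) : ZMod 3 := Multiplicative.toAdd g.left

lemma act_apply (g h : U6n n) :
    (U6nAct n g.right) h.left = if Even (pr g) then h.left else h.left⁻¹ := by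
  have : g.right = Multiplicative.ofAdd (Multiplicative.toAdd g.right) := rfl
  rw [this, act_eq]
  by_cases hp : Even (pr g)
  · rw [show negAut ^ (Multiplicative.toAdd g.right).val = 1 from negAut_pow_even hp, if_pos hp]
    rfl
  · rw [show negAut ^ (Multiplicative.toAdd g.right).val = negAut from negAut_pow_odd hp,
      if_neg hp]
    rfl

lemma comm_iff (g h : U6n n) :
    g * h = h * g ↔
      g.left * (if Even (pr g) then h.left else h.left⁻¹)
        = h.left * (if Even (pr h) then g.left else g.left⁻¹) := by
  constructor
  · intro e
    have := congrArg SemidirectProduct.left e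
    simpa [SemidirectProduct.mul_left, act_apply] using this
  · intro e
    refine SemidirectProduct.ext ?_ (mul_comm _ _)
    simpa [SemidirectProduct.mul_left, act_apply] using e

lemma comm_of_even_even {g h : U6n n} (hg : Even (pr g)) (hh : Even (pr h)) :
    g * h = h * g := by
  rw [comm_iff, if_pos hg, if_pos hh, mul_comm]

lemma comm_iff_even_odd {g h : U6n n} (hg : Even (pr g)) (hh : ¬ Even (pr h)) :
    g * h = h * g ↔ g.left = 1 := by
  rw [comm_iff, if_pos hg, if_neg hh]
  revert g h
  have : ∀ x y : Multiplicative (ZMod 3), x * y = y * x⁻¹ ↔ x = 1 := by decide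
  intro g h _ _; exact this g.left h.left

lemma comm_iff_odd_odd {g h : U6n n} (hg : ¬ Even (pr g)) (hh : ¬ Even (pr h)) :
    g * h = h * g ↔ g.left = h.left := by
  rw [comm_iff, if_neg hg, if_neg hh]
  revert g h
  have : ∀ x y : Multiplicative (ZMod 3), x * y⁻¹ = y * x⁻¹ ↔ x = y := by decide
  intro g h _ _; exact this g.left h.left

lemma pr_Ua : pr (Ua n) = 1 := by
  haveI : Fact (1 < 2 * n) := ⟨by have := NeZero.pos n; omega⟩
  show ((1 : ZMod (2*n))).val = 1
  exact ZMod.val_one _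

lemma pr_Ub : pr (Ub n) = 0 := by
  haveI : NeZero (2*n) := ⟨by have := NeZero.pos n; omega⟩
  show ((0 : ZMod (2*n))).val = 0
  exact ZMod.val_zero

lemma mem_center_iff (g : U6n n) :
    g ∈ Subgroup.center (U6n n) ↔ (Even (pr g) ∧ g.left = 1) := by
  rw [Subgroup.mem_center_iff]
  constructor
  · intro hc
    by_cases hg : Even (pr g)
    · refine ⟨hg, ?_⟩
      have hodd : ¬ Even (pr (Ua n)) := by rw [pr_Ua]; decide
      have := (comm_iff_even_odd hg hodd).1 (hc (Ua n)).symm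
      exact this
    · exfalso
      have heven : Even (pr (Ub n)) := by rw [pr_Ub]; decide
      have := (comm_iff_even_odd heven hg).1 (hc (Ub n))
      have hne : Multiplicative.ofAdd (1 : ZMod 3) ≠ 1 := by decide
      exact hne this
  · rintro ⟨hg, hl⟩ z
    by_cases hz : Even (pr z)
    · exact comm_of_even_even hz hg
    · exact ((comm_iff_even_odd hg hz).2 hl).symm

end U6nAux

namespace U6nAux
variable {n : ℕ} [NeZero n]

lemma right_v2 : (Ub n * Ua n).right = (Ua n).right := by
  simp [Ua, Ub]

lemma right_v3 : (Ub n * (Ub n * Ua n)).right = (Ua n).right := by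
  simp [Ua, Ub]

lemma pr_v2 : pr (Ub n * Ua n) = 1 := by
  show (Multiplicative.toAdd (Ub n * Ua n).right).val = 1
  rw [right_v2]; exact pr_Ua

lemma pr_v3 : pr (Ub n * (Ub n * Ua n)) = 1 := by
  show (Multiplicative.toAdd (Ub n * (Ub n * Ua n)).right).val = 1
  rw [right_v3]; exact pr_Ua

lemma left_Ub : (Ub n).left = Multiplicative.ofAdd (1 : ZMod 3) := rfl

lemma left_Ua : (Ua n).left = 1 := rfl

lemma left_v2 : (Ub n * Ua n).left = Multiplicative.ofAdd (1 : ZMod 3) := by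
  simp [Ua, Ub]

lemma left_v3 : (Ub n * (Ub n * Ua n)).left = Multiplicative.ofAdd (2 : ZMod 3) := by
  rw [SemidirectProduct.mul_left, left_v2, left_Ub]
  rw [show (Ub n).right = 1 from rfl, map_one (U6nAct n), MulAut.one_apply]
  decide

/-- classification of a vertex into one of 4 commuting classes -/
def cls (n : ℕ) (v : {x : U6n n // x ∉ Subgroup.center (U6n n)}) : Fin 4 :=
  if Even (pr v.val) then 0 else
    ⟨(Multiplicative.toAdd v.val.left).val + 1, by
      have := ZMod.val_lt (Multiplicative.toAdd v.val.left); omega⟩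

end U6nAux


open U6nAux

set_option maxHeartbeats 1000000 in
/-- The clique number of the non-commuting graph of `U_{6n}` is `4`: there is a clique of
size `4`, and every clique has size at most `4`. -/
theorem U6n_clique_number (n : ℕ) (hn : 1 ≤ n) :
    IsGreatest {k | ∃ S : Finset {x : U6n n // x ∉ Subgroup.center (U6n n)},
      (ncGraph n).IsNClique k S} 4 := by
  haveI : NeZero n := ⟨by omega⟩
  classical
  have heven0 : Even (pr (Ub n)) := by rw [pr_Ub]; decide
  have hodd1 : ¬ Even (pr (Ua n)) := by rw [pr_Ua]; decide
  have hodd2 : ¬ Even (pr (Ub n * Ua n)) := by rw [pr_v2]; decide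
  have hodd3 : ¬ Even (pr (Ub n * (Ub n * Ua n))) := by rw [pr_v3]; decide
  have h0 : Ub n ∉ Subgroup.center (U6n n) := by
    rw [mem_center_iff]
    rintro ⟨-, hl⟩
    rw [left_Ub] at hl
    exact (by decide : Multiplicative.ofAdd (1 : ZMod 3) ≠ 1) hl
  have h1 : Ua n ∉ Subgroup.center (U6n n) := by
    rw [mem_center_iff]; rintro ⟨he, -⟩; exact hodd1 he
  have h2 : Ub n * Ua n ∉ Subgroup.center (U6n n) := by
    rw [mem_center_iff]; rintro ⟨he, -⟩; exact hodd2 he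
  have h3 : Ub n * (Ub n * Ua n) ∉ Subgroup.center (U6n n) := by
    rw [mem_center_iff]; rintro ⟨he, -⟩; exact hodd3 he
  have a01 : ¬ (Ub n * Ua n = Ua n * Ub n) := by
    rw [comm_iff_even_odd heven0 hodd1, left_Ub]; decide
  have a02 : ¬ (Ub n * (Ub n * Ua n) = (Ub n * Ua n) * Ub n) := by
    rw [comm_iff_even_odd heven0 hodd2, left_Ub]; decide
  have a03 : ¬ (Ub n * (Ub n * (Ub n * Ua n)) = (Ub n * (Ub n * Ua n)) * Ub n) := by
    rw [comm_iff_even_odd heven0 hodd3, left_Ub]; decide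
  have a12 : ¬ (Ua n * (Ub n * Ua n) = (Ub n * Ua n) * Ua n) := by
    rw [comm_iff_odd_odd hodd1 hodd2, left_Ua, left_v2]; decide
  have a13 : ¬ (Ua n * (Ub n * (Ub n * Ua n)) = (Ub n * (Ub n * Ua n)) * Ua n) := by
    rw [comm_iff_odd_odd hodd1 hodd3, left_Ua, left_v3]; decide
  have a23 : ¬ ((Ub n * Ua n) * (Ub n * (Ub n * Ua n)) = (Ub n * (Ub n * Ua n)) * (Ub n * Ua n)) := by
    rw [comm_iff_odd_odd hodd2 hodd3, left_v2, left_v3]; decide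
  have ne01 : Ub n ≠ Ua n := fun e => hodd1 (e ▸ heven0)
  have ne02 : Ub n ≠ Ub n * Ua n := fun e => hodd2 (e ▸ heven0)
  have ne03 : Ub n ≠ Ub n * (Ub n * Ua n) := fun e => hodd3 (e ▸ heven0)
  have ne12 : Ua n ≠ Ub n * Ua n := by
    intro e
    have := congrArg SemidirectProduct.left e
    rw [left_Ua, left_v2] at this
    exact (by decide : (1 : Multiplicative (ZMod 3)) ≠ Multiplicative.ofAdd 1) this
  have ne13 : Ua n ≠ Ub n * (Ub n * Ua n) := by
    intro e
    have := congrArg SemidirectProduct.left e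
    rw [left_Ua, left_v3] at this
    exact (by decide : (1 : Multiplicative (ZMod 3)) ≠ Multiplicative.ofAdd 2) this
  have ne23 : Ub n * Ua n ≠ Ub n * (Ub n * Ua n) := by
    intro e
    have := congrArg SemidirectProduct.left e
    rw [left_v2, left_v3] at this
    exact (by decide : (Multiplicative.ofAdd (1 : ZMod 3)) ≠ Multiplicative.ofAdd 2) this
  constructor
  · refine ⟨({⟨_, h0⟩, ⟨_, h1⟩, ⟨_, h2⟩, ⟨_, h3⟩} :
      Finset {x : U6n n // x ∉ Subgroup.center (U6n n)}), ?_, ?_⟩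
    · intro u hu v hv huv
      simp only [Finset.coe_insert, Set.mem_insert_iff, Finset.coe_singleton,
        Set.mem_singleton_iff] at hu hv
      rcases hu with rfl | rfl | rfl | rfl <;> rcases hv with rfl | rfl | rfl | rfl <;>
        first
          | exact absurd rfl huv
          | exact a01 | exact fun e => a01 e.symm
          | exact a02 | exact fun e => a02 e.symm
          | exact a03 | exact fun e => a03 e.symm
          | exact a12 | exact fun e => a12 e.symm
          | exact a13 | exact fun e => a13 e.symm
          | exact a23 | exact fun e => a23 e.symm
    · have m0 : (⟨Ub n, h0⟩ : {x : U6n n // x ∉ Subgroup.center (U6n n)}) ∉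
          ({⟨Ua n, h1⟩, ⟨Ub n * Ua n, h2⟩, ⟨Ub n * (Ub n * Ua n), h3⟩} : Finset _) := by
        simp only [Finset.mem_insert, Finset.mem_singleton, Subtype.mk.injEq]
        push_neg
        exact ⟨ne01, ne02, ne03⟩
      have m1 : (⟨Ua n, h1⟩ : {x : U6n n // x ∉ Subgroup.center (U6n n)}) ∉
          ({⟨Ub n * Ua n, h2⟩, ⟨Ub n * (Ub n * Ua n), h3⟩} : Finset _) := by
        simp only [Finset.mem_insert, Finset.mem_singleton, Subtype.mk.injEq]
        push_neg
        exact ⟨ne12, ne13⟩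
      have m2 : (⟨Ub n * Ua n, h2⟩ : {x : U6n n // x ∉ Subgroup.center (U6n n)}) ∉
          ({⟨Ub n * (Ub n * Ua n), h3⟩} : Finset _) := by
        simp only [Finset.mem_singleton, Subtype.mk.injEq]
        exact ne23
      rw [Finset.card_insert_of_notMem m0, Finset.card_insert_of_notMem m1,
        Finset.card_insert_of_notMem m2, Finset.card_singleton]
  · rintro k ⟨S, hS⟩
    have hinj : Set.InjOn (cls n) S := by
      intro u hu v hv hfw
      by_contra hne
      have hcomm : u.val * v.val ≠ v.val * u.val := hS.1 hu hv hne
      unfold cls at hfw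
      split_ifs at hfw with p1 p2 p2
      · exact hcomm (comm_of_even_even p1 p2)
      · exact absurd (congrArg Fin.val hfw) (by simp)
      · exact absurd (congrArg Fin.val hfw) (by simp)
      · have hval := congrArg Fin.val hfw
        have hv' : (Multiplicative.toAdd u.val.left).val
            = (Multiplicative.toAdd v.val.left).val := by
          simpa using hval
        have hl : u.val.left = v.val.left :=
          Multiplicative.toAdd.injective (ZMod.val_injective _ hv')
        exact hcomm ((comm_iff_odd_odd p1 p2).2 hl)
    have hle := Finset.card_le_card_of_injOn (cls n) (fun _ _ => Finset.mem_univ _) hinj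
    have h4 : (Finset.univ : Finset (Fin 4)).card = 4 := by simp
    rw [hS.card_eq, h4] at hle
    exact hle
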